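/- For all integers m ≥ d+2 ≥ 3 (i.e. d ≥ 1 and m ≥ d+2), the inequality (m−3)(m−4)⋯(m−d−2) + 2(m−3)(m−4)⋯(m−d−1) + Σ_{k=1}^{d−2} [(m−2)(m−3)⋯(m−k−1)]·[(m−3)(m−4)⋯(m−d+k−1)] ≥ (m−2)(m−3)⋯(m−d−1) holds. -/

import Mathlib

open Finset

private lemma shift_prod (m : ℤ) (a b s : ℕ) :
    ∏ j ∈ Finset.Icc (a+s) (b+s), (m - (j:ℤ)) = ∏ j ∈ Finset.Icc a b, (m - ((j:ℤ)+s)) := by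
  rw [← Finset.map_add_right_Icc, Finset.prod_map]
  simp [addRightEmbedding]

theorem stmt_6 (d : ℕ) (m : ℤ) (hd : 1 ≤ d) (hm : (d : ℤ) + 2 ≤ m) :
    (∏ j ∈ Finset.Icc 3 (d + 2), (m - (j : ℤ)))
      + 2 * (∏ j ∈ Finset.Icc 3 (d + 1), (m - (j : ℤ)))
      + ∑ k ∈ Finset.Icc 1 (d - 2),
          (∏ j ∈ Finset.Icc 2 (k + 1), (m - (j : ℤ)))
            * (∏ j ∈ Finset.Icc 3 (d - k + 1), (m - (j : ℤ)))
      ≥ ∏ j ∈ Finset.Icc 2 (d + 1), (m - (j : ℤ)) := by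
  set Q : ℤ := ∏ j ∈ Finset.Icc 3 (d + 1), (m - (j : ℤ)) with hQ
  have hQpos : 0 < Q := by
    rw [hQ]
    apply Finset.prod_pos
    intro j hj
    simp only [Finset.mem_Icc] at hj
    have : (j : ℤ) ≤ (d : ℤ) + 1 := by exact_mod_cast hj.2
    linarith
  -- first term
  have h1 : (∏ j ∈ Finset.Icc 3 (d + 2), (m - (j : ℤ)))
      = Q * (m - ((d : ℤ) + 2)) := by
    rw [hQ, show d + 2 = (d + 1) + 1 from rfl,
      Finset.prod_Icc_succ_top (by omega)]
    push_cast; ring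
  -- RHS
  have h2 : (∏ j ∈ Finset.Icc 2 (d + 1), (m - (j : ℤ))) = (m - 2) * Q := by
    rw [hQ, ← Finset.Ico_add_one_right_eq_Icc, ← Finset.Ico_add_one_right_eq_Icc,
      Finset.prod_eq_prod_Ico_succ_bot (by omega)]
    norm_num
  -- each summand ≥ Q
  have h3 : ∀ k ∈ Finset.Icc 1 (d - 2),
      Q ≤ (∏ j ∈ Finset.Icc 2 (k + 1), (m - (j : ℤ)))
            * (∏ j ∈ Finset.Icc 3 (d - k + 1), (m - (j : ℤ))) := by
    intro k hk
    simp only [Finset.mem_Icc] at hk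
    obtain ⟨hk1, hk2⟩ := hk
    have hd3 : 3 ≤ d := by omega
    have hsplit : Q = (∏ j ∈ Finset.Icc 3 (k + 2), (m - (j : ℤ)))
        * (∏ j ∈ Finset.Icc (k + 3) (d + 1), (m - (j : ℤ))) := by
      rw [hQ, ← Finset.prod_union]
      · congr 1
        ext x
        simp only [Finset.mem_union, Finset.mem_Icc]
        omega
      · rw [Finset.disjoint_left]
        intro x hx hx'
        simp only [Finset.mem_Icc] at hx hx'
        omega
    have hA : (∏ j ∈ Finset.Icc 3 (k + 2), (m - (j : ℤ)))
        ≤ ∏ j ∈ Finset.Icc 2 (k + 1), (m - (j : ℤ)) := by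
      rw [show (3:ℕ) = 2 + 1 from rfl, show k + 2 = (k + 1) + 1 from rfl,
        shift_prod]
      apply Finset.prod_le_prod
      · intro j hj
        simp only [Finset.mem_Icc] at hj
        have : (j : ℤ) ≤ (k : ℤ) + 1 := by exact_mod_cast hj.2
        push_cast
        have : (k : ℤ) ≤ (d : ℤ) - 2 := by omega
        linarith
      · intro j hj
        push_cast
        linarith
    have hB : (∏ j ∈ Finset.Icc (k + 3) (d + 1), (m - (j : ℤ)))
        ≤ ∏ j ∈ Finset.Icc 3 (d - k + 1), (m - (j : ℤ)) := by
      rw [show k + 3 = 3 + k by ring, show d + 1 = (d - k + 1) + k by omega,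
        shift_prod]
      apply Finset.prod_le_prod
      · intro j hj
        simp only [Finset.mem_Icc] at hj
        have hj' : (j : ℤ) ≤ ((d - k + 1 : ℕ) : ℤ) := by exact_mod_cast hj.2
        have : ((d - k + 1 : ℕ) : ℤ) + k ≤ (d : ℤ) + 1 := by push_cast [Nat.cast_sub (by omega : k ≤ d)]; omega
        linarith [Int.ofNat_nonneg k]
      · intro j hj
        have : (0:ℤ) ≤ k := Int.ofNat_nonneg k
        linarith
    have hAnn : 0 ≤ ∏ j ∈ Finset.Icc 3 (k + 2), (m - (j : ℤ)) := by
      apply Finset.prod_nonneg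
      intro j hj
      simp only [Finset.mem_Icc] at hj
      have : (j : ℤ) ≤ (k : ℤ) + 2 := by exact_mod_cast hj.2
      have : (k : ℤ) + 2 ≤ (d : ℤ) := by
        have : (k : ℤ) ≤ ((d - 2 : ℕ) : ℤ) := by exact_mod_cast hk2
        omega
      linarith
    have hBnn : 0 ≤ ∏ j ∈ Finset.Icc (k + 3) (d + 1), (m - (j : ℤ)) := by
      apply Finset.prod_nonneg
      intro j hj
      simp only [Finset.mem_Icc] at hj
      have : (j : ℤ) ≤ (d : ℤ) + 1 := by exact_mod_cast hj.2
      linarith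
    calc Q = (∏ j ∈ Finset.Icc 3 (k + 2), (m - (j : ℤ)))
        * (∏ j ∈ Finset.Icc (k + 3) (d + 1), (m - (j : ℤ))) := hsplit
      _ ≤ (∏ j ∈ Finset.Icc 2 (k + 1), (m - (j : ℤ)))
            * (∏ j ∈ Finset.Icc 3 (d - k + 1), (m - (j : ℤ))) :=
        mul_le_mul hA hB hBnn (hAnn.trans hA)
  have hS : ((d - 2 : ℕ) : ℤ) * Q ≤ ∑ k ∈ Finset.Icc 1 (d - 2),
      (∏ j ∈ Finset.Icc 2 (k + 1), (m - (j : ℤ)))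
        * (∏ j ∈ Finset.Icc 3 (d - k + 1), (m - (j : ℤ))) := by
    calc ((d - 2 : ℕ) : ℤ) * Q = ∑ _k ∈ Finset.Icc 1 (d - 2), Q := by
          rw [Finset.sum_const, Nat.card_Icc]
          simp [nsmul_eq_mul]
      _ ≤ _ := Finset.sum_le_sum h3
  have hcast : (d : ℤ) - 2 ≤ ((d - 2 : ℕ) : ℤ) := by omega
  have hcast' : ((d : ℤ) - 2) * Q ≤ ((d - 2 : ℕ) : ℤ) * Q :=
    mul_le_mul_of_nonneg_right hcast hQpos.le
  rw [ge_iff_le, h2, h1]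
  nlinarith [hS, hcast', hQpos]
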